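/- Let n ≥ 1 and let H, J : ℝ^n → ℝ be two selectors. If H(ε) = J(ε) for every ε ∈ {0,1}^n, then H(x) = J(x) for every x ∈ ℝ^n. -/
import Mathlib

/-- Key lemma: if `H` is a selector, `x` has pairwise distinct coordinates with
`H x = x i`, and `v` is weakly order-preserving w.r.t. `x`, then `H v = v i`. -/
lemma selector_path {n : ℕ} (H : (Fin n → ℝ) → ℝ)
    (hcontH : Continuous H) (hselH : ∀ x : Fin n → ℝ, ∃ i : Fin n, H x = x i)
    (x : Fin n → ℝ) (hx : Function.Injective x) (i : Fin n) (hi : H x = x i)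
    (v : Fin n → ℝ) (hv : ∀ a b : Fin n, x a < x b → v a ≤ v b) :
    H v = v i := by
  set γ : ℝ → (Fin n → ℝ) := fun t a => (1 - t) * x a + t * v a with hγ
  have hγcont : Continuous γ := by
    apply continuous_pi
    intro a
    fun_prop
  have hγ0 : γ 0 = x := by funext a; simp [hγ]
  have hγ1 : γ 1 = v := by funext a; simp [hγ]
  -- strict order preserved during the homotopy on [0,1)
  have hlt : ∀ t ∈ Set.Ico (0:ℝ) 1, ∀ a b : Fin n, x a < x b → γ t a < γ t b := by
    intro t ht a b hab
    have h1 : (0:ℝ) < 1 - t := by linarith [ht.2]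
    have h2 := hv a b hab
    simp only [hγ]
    nlinarith [ht.1]
  have hinj : ∀ t ∈ Set.Ico (0:ℝ) 1, ∀ a b : Fin n, a ≠ b → γ t a ≠ γ t b := by
    intro t ht a b hab
    rcases lt_trichotomy (x a) (x b) with h | h | h
    · exact ne_of_lt (hlt t ht a b h)
    · exact absurd (hx h) hab
    · exact (ne_of_lt (hlt t ht b a h)).symm
  have hγm : ∀ m : Fin n, Continuous fun t => γ t m := by
    intro m; fun_prop
  have hAclosed : ∀ m : Fin n, IsClosed {t : ℝ | H (γ t) = γ t m} := by
    intro m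
    exact isClosed_eq (hcontH.comp hγcont) (hγm m)
  set U : Set ℝ := ⋃ m : Fin n, (if m = i then (∅ : Set ℝ) else {t : ℝ | H (γ t) = γ t m})
    with hU
  have hUclosed : IsClosed U := by
    apply isClosed_iUnion_of_finite
    intro m
    split
    · exact isClosed_empty
    · exact hAclosed m
  have hUmem : ∀ t : ℝ, t ∈ U ↔ ∃ m : Fin n, m ≠ i ∧ H (γ t) = γ t m := by
    intro t
    constructor
    · intro ht
      rcases Set.mem_iUnion.1 ht with ⟨m, hm⟩
      by_cases hmi : m = i
      · rw [if_pos hmi] at hm; exact absurd hm (Set.notMem_empty t)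
      · rw [if_neg hmi] at hm; exact ⟨m, hmi, hm⟩
    · rintro ⟨m, hmi, hm⟩
      exact Set.mem_iUnion.2 ⟨m, by rw [if_neg hmi]; exact hm⟩
  -- the index is constant on [0,1)
  have main : ∀ t ∈ Set.Ico (0:ℝ) 1, H (γ t) = γ t i := by
    by_contra hcon
    push_neg at hcon
    obtain ⟨t0, ht0, ht0ne⟩ := hcon
    have hP : IsPreconnected (Set.Ico (0:ℝ) 1) := isPreconnected_Ico
    have hsub : Set.Ico (0:ℝ) 1 ⊆ Uᶜ ∪ {t : ℝ | H (γ t) = γ t i}ᶜ := by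
      intro t ht
      by_cases htU : t ∈ U
      · right
        rcases (hUmem t).1 htU with ⟨m, hmi, hm⟩
        intro hti
        exact hinj t ht m i hmi (hm ▸ hti)
      · left; exact htU
    have h1 : (Set.Ico (0:ℝ) 1 ∩ Uᶜ).Nonempty := by
      refine ⟨0, ⟨le_refl _, one_pos⟩, ?_⟩
      intro h0
      rcases (hUmem 0).1 h0 with ⟨m, hmi, hm⟩
      rw [hγ0] at hm
      exact hmi (hx (hi.symm.trans hm)).symm
    have h2 : (Set.Ico (0:ℝ) 1 ∩ {t : ℝ | H (γ t) = γ t i}ᶜ).Nonempty := ⟨t0, ht0, ht0ne⟩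
    obtain ⟨t', ht', ht'1, ht'2⟩ :=
      hP Uᶜ ({t : ℝ | H (γ t) = γ t i}ᶜ) hUclosed.isOpen_compl
        (hAclosed i).isOpen_compl hsub h1 h2
    obtain ⟨m, hm⟩ := hselH (γ t')
    by_cases hmi : m = i
    · exact ht'2 (hmi ▸ hm)
    · exact ht'1 ((hUmem t').2 ⟨m, hmi, hm⟩)
  -- pass to the limit t = 1
  have hCclosed : IsClosed {t : ℝ | H (γ t) = γ t i} := hAclosed i
  have h1mem : (1:ℝ) ∈ {t : ℝ | H (γ t) = γ t i} := by
    have hsub : closure (Set.Ico (0:ℝ) 1) ⊆ {t : ℝ | H (γ t) = γ t i} :=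
      closure_minimal main hCclosed
    have : (1:ℝ) ∈ closure (Set.Ico (0:ℝ) 1) := by
      rw [closure_Ico (by norm_num : (0:ℝ) ≠ 1)]
      exact ⟨by norm_num, le_refl _⟩
    exact hsub this
  have := h1mem
  rwa [Set.mem_setOf_eq, hγ1] at this

theorem selectors_agree_on_injective
    (n : ℕ) (H J : (Fin n → ℝ) → ℝ)
    (hcontH : Continuous H) (hselH : ∀ x : Fin n → ℝ, ∃ i : Fin n, H x = x i)
    (hcontJ : Continuous J) (hselJ : ∀ x : Fin n → ℝ, ∃ i : Fin n, J x = x i)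
    (hcube : ∀ ε : Fin n → Bool,
      H (fun i => if ε i then 1 else 0) = J (fun i => if ε i then 1 else 0))
    (x : Fin n → ℝ) (hx : Function.Injective x) : H x = J x := by
  obtain ⟨i, hi⟩ := hselH x
  obtain ⟨j, hj⟩ := hselJ x
  set r : Fin n → ℕ := fun a => (Finset.univ.filter fun b => x b < x a).card with hr
  have hrlt : ∀ a b : Fin n, x a < x b → r a < r b := by
    intro a b hab
    apply Finset.card_lt_card
    constructor
    · intro c hc
      simp only [Finset.mem_filter, Finset.mem_univ, true_and] at hc ⊢
      exact hc.trans hab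
    · intro hsub
      have : a ∈ Finset.univ.filter fun b' => x b' < x b := by
        simp [hab]
      have := hsub this
      simp at this
  -- for each k, the vertex v_k and the common value argument
  have hvk : ∀ k : ℕ, (if k ≤ r i then (1:ℝ) else 0) = (if k ≤ r j then (1:ℝ) else 0) := by
    intro k
    set v : Fin n → ℝ := fun a => if k ≤ r a then (1:ℝ) else 0 with hv
    have hmono : ∀ a b : Fin n, x a < x b → v a ≤ v b := by
      intro a b hab
      have := hrlt a b hab
      simp only [hv]
      split_ifs with h1 h2 h2
      · exact le_refl _
      · exact absurd this (by omega)
      · norm_num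
      · exact le_refl _
    have hHv : H v = v i := selector_path H hcontH hselH x hx i hi v hmono
    have hJv : J v = v j := selector_path J hcontJ hselJ x hx j hj v hmono
    have hveq : v = fun a => if (fun a => decide (k ≤ r a)) a then (1:ℝ) else 0 := by
      funext a
      simp [hv, decide_eq_true_iff]
    have hHJ : H v = J v := by
      rw [hveq]
      exact hcube fun a => decide (k ≤ r a)
    have : v i = v j := by rw [← hHv, ← hJv, hHJ]
    simpa [hv] using this
  have hij : r i = r j := by
    have h1 := hvk (r i)
    rw [if_pos (le_refl _)] at h1
    have hle1 : r i ≤ r j := by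
      by_contra h
      rw [if_neg (by omega)] at h1
      norm_num at h1
    have h2 := hvk (r i + 1)
    rw [if_neg (by omega)] at h2
    have hle2 : r j ≤ r i := by
      by_contra h
      rw [if_pos (by omega)] at h2
      norm_num at h2
    omega
  have hxij : x i = x j := by
    rcases lt_trichotomy (x i) (x j) with h | h | h
    · exact absurd hij (by have := hrlt i j h; omega)
    · exact h
    · exact absurd hij (by have := hrlt j i h; omega)
  rw [hi, hj, hxij]

lemma dense_injective (n : ℕ) (hn : 1 ≤ n) :
    Dense {x : Fin n → ℝ | Function.Injective x} := by
  rw [Metric.dense_iff]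
  intro x ρ hρ
  set bad : Set ℝ :=
    Set.range fun p : Fin n × Fin n => (x p.2 - x p.1) / ((p.1 : ℝ) - (p.2 : ℝ)) with hbad
  have hbadfin : bad.Finite := Set.finite_range _
  have hnpos : (0:ℝ) < ρ / n := by
    apply div_pos hρ
    exact_mod_cast hn
  have hinf : (Set.Ioo (0:ℝ) (ρ / n)).Infinite := Set.Ioo_infinite hnpos
  obtain ⟨c, hc⟩ := (hinf.diff hbadfin).nonempty
  obtain ⟨⟨hc0, hcρ⟩, hcbad⟩ := hc
  set y : Fin n → ℝ := fun a => x a + c * (a : ℝ) with hy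
  refine ⟨y, ?_, ?_⟩
  · rw [Metric.mem_ball, dist_pi_lt_iff hρ]
    intro b
    rw [Real.dist_eq]
    have hb : ((b : Fin n) : ℝ) < n := by exact_mod_cast b.isLt
    have hb0 : (0:ℝ) ≤ (b : ℝ) := by positivity
    have : y b - x b = c * (b : ℝ) := by simp [hy]
    rw [this, abs_of_nonneg (by positivity)]
    have h1 : c * (b : ℝ) < c * n := by
      rcases eq_or_lt_of_le hb0 with h | h
      · rw [← h]; simpa using mul_pos hc0 (by exact_mod_cast Nat.lt_of_lt_of_le Nat.zero_lt_one hn : (0:ℝ) < n)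
      · exact mul_lt_mul_of_pos_left hb hc0
    have h2 : c * n < ρ := by
      have hn' : (0:ℝ) < n := by exact_mod_cast hn
      calc c * (n:ℝ) < (ρ / n) * n := mul_lt_mul_of_pos_right hcρ hn'
        _ = ρ := by field_simp
    linarith
  · intro a b hab'
    by_contra hab
    apply hcbad
    have hY : x a + c * (a : ℝ) = x b + c * (b : ℝ) := by
      simpa [hy] using hab'
    have hne : ((a : ℝ) : ℝ) - (b : ℝ) ≠ 0 := by
      intro h
      apply hab
      have : ((a : ℝ)) = (b : ℝ) := by linarith
      exact_mod_cast Fin.ext (by exact_mod_cast this)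
    refine ⟨(a, b), ?_⟩
    field_simp
    linarith

/-- Two selectors that coincide on the Boolean cube `{0,1}ⁿ` coincide everywhere. -/
theorem selectors_determined_on_boolean_cube
    (n : ℕ) (hn : 1 ≤ n) (H J : (Fin n → ℝ) → ℝ)
    (hcontH : Continuous H) (hselH : ∀ x : Fin n → ℝ, ∃ i : Fin n, H x = x i)
    (hcontJ : Continuous J) (hselJ : ∀ x : Fin n → ℝ, ∃ i : Fin n, J x = x i)
    (hcube : ∀ ε : Fin n → Bool,
      H (fun i => if ε i then 1 else 0) = J (fun i => if ε i then 1 else 0)) :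
    ∀ x : Fin n → ℝ, H x = J x := by
  have := Continuous.ext_on (dense_injective n hn) hcontH hcontJ
    (fun x hx => selectors_agree_on_injective n H J hcontH hselH hcontJ hselJ hcube x hx)
  exact fun x => congrFun this x
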